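/- Let H : ℝ → ℝ be continuous and coercive and F0 : ℝ → ℝ be continuous, non-increasing and semi-coercive, and set F := ℜF0. Then F is a fixed point of all three operators: R̲F = F = R̄F and ℜF = F. Moreover, for every p ∈ ℝ: if F0(p) ≤ H(p) then F0(p) ≤ (ℜF0)(p) ≤ H(p), and if F0(p) ≥ H(p) then H(p) ≤ (ℜF0)(p) ≤ F0(p); in particular |ℜF0 − H| ≤ |F0 − H| pointwise. -/

import Mathlib

open Set Filter

attribute [local instance] Classical.propDecidable

noncomputable section

/-- `H` is coercive: `H p → +∞` as `|p| → +∞`. -/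
def Coercive (H : ℝ → ℝ) : Prop := Tendsto H (cocompact ℝ) atTop

/-- `F` is semi-coercive: `F p → +∞` as `p → -∞`. -/
def SemiCoercive (F : ℝ → ℝ) : Prop := Tendsto F atBot atTop

/-- Sub-relaxation: `(R̲F)(p) = sup_{q ≥ p} min (F q) (H q)`. -/
def subR (H F : ℝ → ℝ) (p : ℝ) : ℝ := sSup ((fun q => min (F q) (H q)) '' Ici p)

/-- Super-relaxation: `(R̄F)(p) = inf_{q ≤ p} max (F q) (H q)`. -/
def supR (H F : ℝ → ℝ) (p : ℝ) : ℝ := sInf ((fun q => max (F q) (H q)) '' Iic p)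

/-- Relaxation operator: `R̲F` where `F ≥ H`, `R̄F` where `F ≤ H`. -/
def relax (H F : ℝ → ℝ) (p : ℝ) : ℝ := if H p ≤ F p then subR H F p else supR H F p

/-- `p` is a negative characteristic point of `F` relative to `H`. -/
def negChar (H F : ℝ → ℝ) (p : ℝ) : Prop :=
  H p = F p ∧ ∃ ε > 0, ∀ q ∈ Ioo (p - ε) p, H q < H p

/-- `p` is a positive characteristic point of `F` relative to `H`. -/
def posChar (H F : ℝ → ℝ) (p : ℝ) : Prop :=
  H p = F p ∧ ∃ ε > 0, ∀ q ∈ Ioo p (p + ε), H p < H q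

/-- The upper point `p⁺ ∈ ℝ ∪ {+∞}` associated with `p` and `H`. -/
def upperPt (H : ℝ → ℝ) (p : ℝ) : EReal :=
  if ∀ ε > 0, ∃ q, p < q ∧ q < p + ε ∧ H q ≤ H p then (p : EReal)
  else sSup ((fun q : ℝ => (q : EReal)) '' {q : ℝ | p < q ∧ ∀ r ∈ Ioo p q, H p < H r})

/-- The lower point `p⁻` associated with `p` and `H`. -/
def lowerPt (H : ℝ → ℝ) (p : ℝ) : ℝ :=
  if ∀ ε > 0, ∃ q, p - ε < q ∧ q < p ∧ H p ≤ H q then p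
  else sInf {q : ℝ | q < p ∧ ∀ r ∈ Ioo q p, H r < H p}

/-- `p` is a positive limiter point of `F`. -/
def posLimiter (H F : ℝ → ℝ) (p : ℝ) : Prop :=
  (p : EReal) < upperPt H p ∧ F p ≤ H p ∧
    ∀ q : ℝ, H q < H p → F q ≤ H q →
      {r : ℝ | lowerPt H q < r ∧ (r : EReal) < upperPt H q} ∩
        {r : ℝ | p < r ∧ (r : EReal) < upperPt H p} = ∅

/-- `p` is a negative limiter point of `F`. -/
def negLimiter (H F : ℝ → ℝ) (p : ℝ) : Prop :=
  lowerPt H p < p ∧ H p ≤ F p ∧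
    ∀ q : ℝ, H q ≤ F q → H p < H q →
      {r : ℝ | lowerPt H q < r ∧ (r : EReal) < upperPt H q} ∩ Ioo (lowerPt H p) p = ∅

/-- The Godunov flux associated with `H`. -/
def godunov (H : ℝ → ℝ) (q p : ℝ) : ℝ :=
  if p ≤ q then sSup (H '' Icc p q) else sInf (H '' Icc q p)

/-- The lower (set-valued) Godunov semi-flux `G̲(q,p)`, as a subset of the extended reals. -/
def subG (H : ℝ → ℝ) (q p : ℝ) : Set EReal :=
  if q < p then {⊥}
  else if q = p then Iic ((H p : ℝ) : EReal)
  else {((godunov H q p : ℝ) : EReal)}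

/-- The upper (set-valued) Godunov semi-flux `Ḡ(q,p)`, as a subset of the extended reals. -/
def supG (H : ℝ → ℝ) (q p : ℝ) : Set EReal :=
  if q < p then {((godunov H q p : ℝ) : EReal)}
  else if q = p then Ici ((H p : ℝ) : EReal)
  else {⊤}

section Aux

variable (H : ℝ → ℝ) {F0 : ℝ → ℝ}

lemma subR_nonempty (F0 : ℝ → ℝ) (p : ℝ) :
    ((fun q => min (F0 q) (H q)) '' Ici p).Nonempty := ⟨_, ⟨p, self_mem_Ici, rfl⟩⟩

lemma supR_nonempty (F0 : ℝ → ℝ) (p : ℝ) :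
    ((fun q => max (F0 q) (H q)) '' Iic p).Nonempty := ⟨_, ⟨p, self_mem_Iic, rfl⟩⟩

lemma subR_bdd (hFa : Antitone F0) (p : ℝ) :
    BddAbove ((fun q => min (F0 q) (H q)) '' Ici p) := by
  refine ⟨F0 p, ?_⟩
  rintro x ⟨q, hq, rfl⟩
  exact (min_le_left _ _).trans (hFa hq)

lemma supR_bdd (hFa : Antitone F0) (p : ℝ) :
    BddBelow ((fun q => max (F0 q) (H q)) '' Iic p) := by
  refine ⟨F0 p, ?_⟩
  rintro x ⟨q, hq, rfl⟩
  exact (hFa hq).trans (le_max_left _ _)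

lemma subR_le (hFa : Antitone F0) (p : ℝ) : subR H F0 p ≤ F0 p :=
  csSup_le (subR_nonempty H F0 p) (by
    rintro x ⟨q, hq, rfl⟩
    exact (min_le_left _ _).trans (hFa hq))

lemma le_subR (hFa : Antitone F0) (p : ℝ) : min (F0 p) (H p) ≤ subR H F0 p :=
  le_csSup (subR_bdd H hFa p) ⟨p, self_mem_Ici, rfl⟩

lemma le_supR (hFa : Antitone F0) (p : ℝ) : F0 p ≤ supR H F0 p :=
  le_csInf (supR_nonempty H F0 p) (by
    rintro x ⟨q, hq, rfl⟩
    exact (hFa hq).trans (le_max_left _ _))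

lemma supR_le (hFa : Antitone F0) (p : ℝ) : supR H F0 p ≤ max (F0 p) (H p) :=
  csInf_le (supR_bdd H hFa p) ⟨p, self_mem_Iic, rfl⟩

lemma subR_anti (hFa : Antitone F0) : Antitone (subR H F0) := fun p q h =>
  csSup_le_csSup (subR_bdd H hFa p) (subR_nonempty H F0 q)
    (image_mono (Ici_subset_Ici.mpr h))

lemma supR_anti (hFa : Antitone F0) : Antitone (supR H F0) := fun p q h =>
  csInf_le_csInf (supR_bdd H hFa q) (supR_nonempty H F0 p)
    (image_mono (Iic_subset_Iic.mpr h))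

lemma subR_le_supR (hFa : Antitone F0) (p : ℝ) : subR H F0 p ≤ supR H F0 p :=
  le_csInf (supR_nonempty H F0 p) (by
    rintro x ⟨r, hr, rfl⟩
    refine csSup_le (subR_nonempty H F0 p) ?_
    rintro y ⟨q, hq, rfl⟩
    exact (min_le_left _ _).trans ((hFa (hr.trans hq)).trans (le_max_left _ _)))

lemma subR_tie (hFa : Antitone F0) {r : ℝ} (h : F0 r = H r) : subR H F0 r = F0 r := by
  refine le_antisymm (subR_le H hFa r) ?_
  have := le_subR H hFa r
  rwa [← h, min_self] at this

lemma supR_tie (hFa : Antitone F0) {r : ℝ} (h : F0 r = H r) : supR H F0 r = F0 r := by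
  refine le_antisymm ?_ (le_supR H hFa r)
  have := supR_le H hFa r
  rwa [← h, max_self] at this

lemma relax_of_le {p : ℝ} (h : H p ≤ F0 p) : relax H F0 p = subR H F0 p := by
  unfold relax; rw [if_pos h]

lemma relax_of_ge (hFa : Antitone F0) {p : ℝ} (h : F0 p ≤ H p) :
    relax H F0 p = supR H F0 p := by
  unfold relax
  split_ifs with h'
  · have heq : F0 p = H p := le_antisymm h h'
    rw [subR_tie H hFa heq, supR_tie H hFa heq]
  · rfl

lemma relax_le_max (hFa : Antitone F0) (p : ℝ) :
    relax H F0 p ≤ max (F0 p) (H p) := by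
  unfold relax
  split_ifs with h
  · exact (subR_le H hFa p).trans (le_max_left _ _)
  · exact supR_le H hFa p

lemma min_le_relax (hFa : Antitone F0) (p : ℝ) :
    min (F0 p) (H p) ≤ relax H F0 p := by
  unfold relax
  split_ifs with h
  · exact le_subR H hFa p
  · exact (min_le_left _ _).trans (le_supR H hFa p)

lemma relax_anti (hH : Continuous H) (hF : Continuous F0) (hFa : Antitone F0) :
    Antitone (relax H F0) := by
  intro p q hpq
  unfold relax
  split_ifs with h1 h2 h2
  · exact subR_anti H hFa hpq
  · -- H q ≤ F0 q, ¬ (H p ≤ F0 p) : subR q ≤ supR p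
    exact (subR_anti H hFa hpq).trans (subR_le_supR H hFa p)
  · -- ¬ (H q ≤ F0 q), H p ≤ F0 p : supR q ≤ subR p
    push_neg at h1
    rcases eq_or_lt_of_le h2 with heq | hlt
    · calc supR H F0 q ≤ supR H F0 p := supR_anti H hFa hpq
        _ = F0 p := supR_tie H hFa heq.symm
        _ = subR H F0 p := (subR_tie H hFa heq.symm).symm
    · have hg : Continuous (fun x => F0 x - H x) := hF.sub hH
      have h0 : (0 : ℝ) ∈ Icc (F0 q - H q) (F0 p - H p) :=
        ⟨by linarith, by linarith⟩
      obtain ⟨r, hr, hr0⟩ := intermediate_value_Icc' hpq hg.continuousOn h0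
      have heq : F0 r = H r := by
        have : F0 r - H r = 0 := hr0
        linarith
      calc supR H F0 q ≤ supR H F0 r := supR_anti H hFa hr.2
        _ = F0 r := supR_tie H hFa heq
        _ = subR H F0 r := (subR_tie H hFa heq).symm
        _ ≤ subR H F0 p := subR_anti H hFa hr.1
  · exact supR_anti H hFa hpq

lemma subR_relax_fixed (hH : Continuous H) (hF : Continuous F0) (hFa : Antitone F0)
    (p : ℝ) : subR H (relax H F0) p = relax H F0 p := by
  set F := relax H F0 with hFdef
  have hanti : Antitone F := relax_anti H hH hF hFa
  have hbdd : BddAbove ((fun q => min (F q) (H q)) '' Ici p) := by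
    refine ⟨F p, ?_⟩
    rintro x ⟨q, hq, rfl⟩
    exact (min_le_left _ _).trans (hanti hq)
  refine le_antisymm (csSup_le ⟨_, ⟨p, self_mem_Ici, rfl⟩⟩ ?_) ?_
  · rintro x ⟨q, hq, rfl⟩
    exact (min_le_left _ _).trans (hanti hq)
  · by_cases h : F p ≤ H p
    · have hmin : min (F p) (H p) = F p := min_eq_left h
      calc F p = min (F p) (H p) := hmin.symm
        _ ≤ _ := le_csSup hbdd ⟨p, self_mem_Ici, rfl⟩
    · push_neg at h
      have hpF0 : H p ≤ F0 p := by
        by_contra hc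
        push_neg at hc
        have h2 := relax_le_max H hFa p
        rw [max_eq_right hc.le] at h2
        exact absurd h2 (not_le.mpr h)
      have hFp : F p = subR H F0 p := relax_of_le H hpF0
      rw [hFp]
      refine csSup_le (subR_nonempty H F0 p) ?_
      rintro x ⟨q, hq, rfl⟩
      have h1 : min (F0 q) (H q) ≤ min (F q) (H q) :=
        le_min (min_le_relax H hFa q) (min_le_right _ _)
      exact h1.trans (le_csSup hbdd ⟨q, hq, rfl⟩)

lemma supR_relax_fixed (hH : Continuous H) (hF : Continuous F0) (hFa : Antitone F0)
    (p : ℝ) : supR H (relax H F0) p = relax H F0 p := by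
  set F := relax H F0 with hFdef
  have hanti : Antitone F := relax_anti H hH hF hFa
  have hbdd : BddBelow ((fun q => max (F q) (H q)) '' Iic p) := by
    refine ⟨F p, ?_⟩
    rintro x ⟨q, hq, rfl⟩
    exact (hanti hq).trans (le_max_left _ _)
  refine le_antisymm ?_ (le_csInf ⟨_, ⟨p, self_mem_Iic, rfl⟩⟩ ?_)
  · by_cases h : H p ≤ F p
    · have hmax : max (F p) (H p) = F p := max_eq_left h
      calc supR H F p ≤ max (F p) (H p) := csInf_le hbdd ⟨p, self_mem_Iic, rfl⟩
        _ = F p := hmax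
    · push_neg at h
      have hpF0 : F0 p ≤ H p := by
        by_contra hc
        push_neg at hc
        have h2 := min_le_relax H hFa p
        rw [min_eq_right hc.le] at h2
        exact absurd h2 (not_le.mpr h)
      have hFp : F p = supR H F0 p := relax_of_ge H hFa hpF0
      rw [hFp]
      refine le_csInf (supR_nonempty H F0 p) ?_
      rintro x ⟨q, hq, rfl⟩
      have h1 : max (F q) (H q) ≤ max (F0 q) (H q) :=
        max_le (relax_le_max H hFa q) (le_max_right _ _)
      exact (csInf_le hbdd ⟨q, hq, rfl⟩).trans h1
  · rintro x ⟨q, hq, rfl⟩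
    exact (hanti hq).trans (le_max_left _ _)

end Aux

/-- `ℜF0` is a fixed point of all three operators, and is between `F0` and `H`. -/
theorem relax_fixed_point_and_between (H F0 : ℝ → ℝ)
    (hH : Continuous H) (hHc : Coercive H)
    (hF : Continuous F0) (hFa : Antitone F0) (hFs : SemiCoercive F0) :
    subR H (relax H F0) = relax H F0 ∧
    supR H (relax H F0) = relax H F0 ∧
    relax H (relax H F0) = relax H F0 ∧
    (∀ p : ℝ,
      (F0 p ≤ H p → F0 p ≤ relax H F0 p ∧ relax H F0 p ≤ H p) ∧
      (H p ≤ F0 p → H p ≤ relax H F0 p ∧ relax H F0 p ≤ F0 p) ∧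
      |relax H F0 p - H p| ≤ |F0 p - H p|) := by
  have hanti : Antitone (relax H F0) := relax_anti H hH hF hFa
  refine ⟨funext fun p => subR_relax_fixed H hH hF hFa p,
    funext fun p => supR_relax_fixed H hH hF hFa p, ?_, ?_⟩
  · funext p
    show (if H p ≤ relax H F0 p then subR H (relax H F0) p
      else supR H (relax H F0) p) = relax H F0 p
    split_ifs with h
    · exact subR_relax_fixed H hH hF hFa p
    · exact supR_relax_fixed H hH hF hFa p
  · intro p
    have hmin := min_le_relax H hFa p
    have hmax := relax_le_max H hFa p
    refine ⟨fun h => ?_, fun h => ?_, ?_⟩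
    · rw [min_eq_left h] at hmin
      rw [max_eq_right h] at hmax
      exact ⟨hmin, hmax⟩
    · rw [min_eq_right h] at hmin
      rw [max_eq_left h] at hmax
      exact ⟨hmin, hmax⟩
    · rcases le_total (F0 p) (H p) with h | h
      · rw [min_eq_left h] at hmin
        rw [max_eq_right h] at hmax
        rw [abs_of_nonpos (by linarith), abs_of_nonpos (by linarith)]
        linarith
      · rw [min_eq_right h] at hmin
        rw [max_eq_left h] at hmax
        rw [abs_of_nonneg (by linarith), abs_of_nonneg (by linarith)]
        linarith
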